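/- arXiv:1502.05277 — 2 statements merged into one kernel-verified Lean document; each statement's English description precedes it below -/
import Mathlib

section
/- Let G be a finite simple graph. Then td(G) equals the minimum, over all subsets S of V(G), of td(G⟨S⟩) + td(G − S). -/
/-- A `k`-ranking of a simple graph `G`: a labeling of the vertices with values from
`{1, …, k}` such that every path joining two distinct vertices with the same label
contains a vertex with a strictly higher label. -/
def IsRanking {V : Type*} (G : SimpleGraph V) (k : ℕ) (f : V → ℕ) : Prop :=
  (∀ v, 1 ≤ f v ∧ f v ≤ k) ∧
  ∀ ⦃u v : V⦄ (p : G.Walk u v), p.IsPath → u ≠ v → f u = f v →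
    ∃ w ∈ p.support, f u < f w

/-- The tree-depth of `G`: the least `k` such that `G` admits a `k`-ranking. -/
noncomputable def treedepth {V : Type*} (G : SimpleGraph V) : ℕ :=
  sInf {k | ∃ f, IsRanking G k f}

/-- The graph `G⟨S⟩` on vertex set `S`: distinct `u, v ∈ S` are adjacent iff they are
adjacent in `G`, or some connected component of `G − S` contains a vertex adjacent in
`G` to `u` and a vertex adjacent in `G` to `v`. -/
def closureOn {V : Type*} (G : SimpleGraph V) (S : Set V) : SimpleGraph S where
  Adj u w := u ≠ w ∧ (G.Adj u.1 w.1 ∨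
    ∃ a b : ↥(Sᶜ : Set V), G.Adj a.1 u.1 ∧ G.Adj b.1 w.1 ∧
      (G.induce (Sᶜ : Set V)).Reachable a b)
  symm := by
    constructor
    rintro u w ⟨hne, h | ⟨a, b, h1, h2, h3⟩⟩
    · exact ⟨hne.symm, Or.inl h.symm⟩
    · exact ⟨hne.symm, Or.inr ⟨b, a, h2, h1, h3.symm⟩⟩
  loopless := ⟨fun u h => h.1 rfl⟩

open SimpleGraph

lemma exists_ranking {V : Type*} [Fintype V] (G : SimpleGraph V) :
    ∃ f, IsRanking G (Fintype.card V) f := by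
  classical
  refine ⟨fun v => (Fintype.equivFin V v : ℕ) + 1, fun v => ⟨le_add_self, ?_⟩, ?_⟩
  · exact (Fintype.equivFin V v).2
  · intro u v p hp huv heq
    simp only [Nat.add_right_cancel_iff] at heq
    exact absurd ((Fintype.equivFin V).injective (Fin.ext heq)) huv

lemma ranking_treedepth {V : Type*} [Fintype V] (G : SimpleGraph V) :
    ∃ f, IsRanking G (treedepth G) f :=
  Nat.sInf_mem (s := {k | ∃ f, IsRanking G k f}) ⟨Fintype.card V, exists_ranking G⟩

lemma treedepth_le_of_hom {V W : Type*} [Fintype W] {G : SimpleGraph V} {G' : SimpleGraph W}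
    (φ : G →g G') (hinj : Function.Injective φ) : treedepth G ≤ treedepth G' := by
  obtain ⟨f, hb, hr⟩ := ranking_treedepth G'
  refine Nat.sInf_le ⟨f ∘ φ, fun v => hb (φ v), ?_⟩
  intro u v p hp huv heq
  obtain ⟨w, hw, hlt⟩ := hr (p.map φ) (p.map_isPath_of_injective hinj hp)
    (fun e => huv (hinj e)) heq
  rw [SimpleGraph.Walk.support_map] at hw
  obtain ⟨w', hw', rfl⟩ := List.mem_map.1 hw
  exact ⟨w', hw', hlt⟩

lemma treedepth_of_isEmpty {V : Type*} [IsEmpty V] (G : SimpleGraph V) : treedepth G = 0 :=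
  Nat.sInf_eq_zero.2 (Or.inl ⟨fun _ => 1, fun v => isEmptyElim v, fun u => isEmptyElim u⟩)

lemma lift_walk {V : Type*} {G : SimpleGraph V} {T : Set V} :
    ∀ {u v : V} (p : G.Walk u v) (hp : ∀ w ∈ p.support, w ∈ T),
      ∃ q : (G.induce T).Walk ⟨u, hp u p.start_mem_support⟩ ⟨v, hp v p.end_mem_support⟩,
        q.support.map Subtype.val = p.support := by
  intro u v p
  induction p with
  | nil => exact fun hp => ⟨Walk.nil, rfl⟩
  | @cons u x v h p ih =>
    intro hp
    have hx : x ∈ T := hp x (by simp)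
    obtain ⟨q, hq⟩ := ih (fun w hw => hp w (by simp [hw]))
    refine ⟨Walk.cons (by exact h : (G.induce T).Adj ⟨u, _⟩ ⟨x, hx⟩) q, ?_⟩
    exact congrArg (u :: ·) hq

lemma closure_walk {V : Type*} (G : SimpleGraph V) (S : Set V) :
    ∀ {x v : V} (p : G.Walk x v) (hv : v ∈ S) (u : V) (hu : u ∈ S),
      (x = u ∨ ∃ (hx : x ∉ S), ∃ a : ↥(Sᶜ : Set V), G.Adj a.1 u ∧
        (G.induce (Sᶜ : Set V)).Reachable a ⟨x, hx⟩) →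
      ∃ q : (closureOn G S).Walk ⟨u, hu⟩ ⟨v, hv⟩,
        ∀ w ∈ q.support, w.1 = u ∨ w.1 ∈ p.support := by
  intro x v p
  induction p with
  | nil =>
    intro hv u hu hcase
    rcases hcase with rfl | ⟨hx, _⟩
    · exact ⟨Walk.nil, by simp⟩
    · exact absurd hv hx
  | @cons x y v h p ih =>
    intro hv u hu hcase
    by_cases hy : y ∈ S
    · by_cases huy : u = y
      · subst huy
        obtain ⟨q, hq⟩ := ih hv u hu (Or.inl rfl)
        exact ⟨q, fun w hw => (hq w hw).imp id (by simp +contextual)⟩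
      · have edge : (closureOn G S).Adj ⟨u, hu⟩ ⟨y, hy⟩ := by
          refine ⟨fun e => huy (congrArg Subtype.val e), ?_⟩
          rcases hcase with rfl | ⟨hx, a, hau, hreach⟩
          · exact Or.inl h
          · exact Or.inr ⟨a, ⟨x, hx⟩, hau, h, hreach⟩
        obtain ⟨q, hq⟩ := ih hv y hy (Or.inl rfl)
        refine ⟨Walk.cons edge q, ?_⟩
        intro w hw
        rw [Walk.support_cons, List.mem_cons] at hw
        rcases hw with rfl | hw
        · exact Or.inl rfl
        · rcases hq w hw with h' | h'
          · exact Or.inr (by simp [h', p.start_mem_support])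
          · exact Or.inr (by simp [h'])
    · have hcase' : ∃ (hx : y ∉ S), ∃ a : ↥(Sᶜ : Set V), G.Adj a.1 u ∧
          (G.induce (Sᶜ : Set V)).Reachable a ⟨y, hy⟩ := by
        rcases hcase with rfl | ⟨hx, a, hau, hreach⟩
        · exact ⟨hy, ⟨y, hy⟩, h.symm, Reachable.refl _⟩
        · exact ⟨hy, a, hau, hreach.trans (Adj.reachable (by exact h))⟩
      obtain ⟨q, hq⟩ := ih hv u hu (Or.inr hcase')
      exact ⟨q, fun w hw => (hq w hw).imp id (by simp +contextual)⟩

lemma td_le_closure {V : Type*} [Fintype V] (G : SimpleGraph V) (S : Set V) :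
    treedepth G ≤ treedepth (closureOn G S) + treedepth (G.induce (Sᶜ : Set V)) := by
  classical
  haveI : Fintype ↥S := Fintype.ofFinite _
  haveI : Fintype ↥(Sᶜ : Set V) := Fintype.ofFinite _
  obtain ⟨f₁, hb₁, hr₁⟩ := ranking_treedepth (closureOn G S)
  obtain ⟨f₂, hb₂, hr₂⟩ := ranking_treedepth (G.induce (Sᶜ : Set V))
  set k₁ := treedepth (closureOn G S) with hk₁
  set k₂ := treedepth (G.induce (Sᶜ : Set V)) with hk₂
  set h : V → ℕ := fun v => if hv : v ∈ S then f₁ ⟨v, hv⟩ + k₂ else f₂ ⟨v, hv⟩ with hdef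
  refine Nat.sInf_le ⟨h, fun v => ?_, ?_⟩
  · by_cases hv : v ∈ S
    · have h1 : h v = f₁ ⟨v, hv⟩ + k₂ := dif_pos hv
      have := (hb₁ ⟨v, hv⟩).1; have := (hb₁ ⟨v, hv⟩).2; omega
    · have h1 : h v = f₂ ⟨v, hv⟩ := dif_neg hv
      have := (hb₂ ⟨v, hv⟩).1; have := (hb₂ ⟨v, hv⟩).2; omega
  · intro u v p hp huv heq
    by_cases hu : u ∈ S
    · by_cases hv : v ∈ S
      · obtain ⟨q, hq⟩ := closure_walk G S p hv u hu (Or.inl rfl)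
        have hne : (⟨u, hu⟩ : ↥S) ≠ ⟨v, hv⟩ := fun e => huv (congrArg Subtype.val e)
        have h1 : h u = f₁ ⟨u, hu⟩ + k₂ := dif_pos hu
        have h2 : h v = f₁ ⟨v, hv⟩ + k₂ := dif_pos hv
        have heq' : f₁ ⟨u, hu⟩ = f₁ ⟨v, hv⟩ := by omega
        obtain ⟨w, hw, hlt⟩ := hr₁ q.bypass q.bypass_isPath hne heq'
        have hw' := q.support_bypass_subset hw
        rcases hq w hw' with hwu | hwp
        · rw [show w = ⟨u, hu⟩ from Subtype.ext hwu] at hlt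
          exact absurd hlt (lt_irrefl _)
        · refine ⟨w.1, hwp, ?_⟩
          have h3 : h w.1 = f₁ w + k₂ := dif_pos w.2
          omega
      · exfalso
        have h1 : h u = f₁ ⟨u, hu⟩ + k₂ := dif_pos hu
        have h2 : h v = f₂ ⟨v, hv⟩ := dif_neg hv
        have := (hb₁ ⟨u, hu⟩).1; have := (hb₂ ⟨v, hv⟩).2; omega
    · by_cases hv : v ∈ S
      · exfalso
        have h1 : h u = f₂ ⟨u, hu⟩ := dif_neg hu
        have h2 : h v = f₁ ⟨v, hv⟩ + k₂ := dif_pos hv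
        have := (hb₁ ⟨v, hv⟩).1; have := (hb₂ ⟨u, hu⟩).2; omega
      · by_cases hex : ∃ w ∈ p.support, w ∈ S
        · obtain ⟨w, hwp, hwS⟩ := hex
          refine ⟨w, hwp, ?_⟩
          have h1 : h u = f₂ ⟨u, hu⟩ := dif_neg hu
          have h2 : h w = f₁ ⟨w, hwS⟩ + k₂ := dif_pos hwS
          have := (hb₁ ⟨w, hwS⟩).1; have := (hb₂ ⟨u, hu⟩).2; omega
        · push_neg at hex
          obtain ⟨q, hq⟩ := lift_walk (T := (Sᶜ : Set V)) p (fun w hw => hex w hw)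
          have hqpath : q.IsPath := by
            rw [Walk.isPath_def]
            have hnd := hp.support_nodup
            rw [← hq] at hnd
            exact hnd.of_map
          have h1 : h u = f₂ ⟨u, hu⟩ := dif_neg hu
          have h2 : h v = f₂ ⟨v, hv⟩ := dif_neg hv
          have heq' : f₂ ⟨u, hu⟩ = f₂ ⟨v, hv⟩ := by omega
          obtain ⟨w, hw, hlt⟩ := hr₂ q hqpath (fun e => huv (congrArg Subtype.val e)) heq'
          refine ⟨w.1, ?_, ?_⟩
          · rw [← hq]; exact List.mem_map_of_mem hw
          · have h3 : h w.1 = f₂ w := dif_neg w.2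
            omega

/-- `td(G)` equals the minimum over all `S ⊆ V(G)` of `td(G⟨S⟩) + td(G − S)`. -/
theorem treedepth_eq_iInf_closureOn {V : Type*} [Fintype V] (G : SimpleGraph V) :
    treedepth G =
      ⨅ S : Set V, (treedepth (closureOn G S) + treedepth (G.induce (Sᶜ : Set V))) := by
  refine le_antisymm (le_ciInf fun S => td_le_closure G S) ?_
  refine (ciInf_le (OrderBot.bddBelow _) Set.univ).trans ?_
  haveI : IsEmpty ↥((Set.univ : Set V)ᶜ) := ⟨fun x => x.2 (Set.mem_univ x.1)⟩
  rw [show treedepth (G.induce ((Set.univ : Set V)ᶜ)) = 0 from treedepth_of_isEmpty _, Nat.add_zero]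
  refine treedepth_le_of_hom ⟨Subtype.val, ?_⟩ Subtype.val_injective
  rintro ⟨a, ha⟩ ⟨b, hb⟩ ⟨hne, hadj | ⟨c, _, _⟩⟩
  · exact hadj
  · exact isEmptyElim c
end

section
/- Let G be a finite simple graph and let T be a subset of V(G). Then td(G) = td(G⟨T⟩) + td(G − T) if and only if there exists a td(G)-ranking of G in which every vertex of T receives a label strictly greater than the label of every vertex not in T. -/
section Aux

open SimpleGraph

variable {V : Type*}

/-- Every graph on a finite vertex type admits some ranking. -/
lemma exists_ranking_s9 {α : Type*} [Finite α] (G : SimpleGraph α) :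
    {k | ∃ f, IsRanking G k f}.Nonempty := by
  obtain ⟨n, ⟨e⟩⟩ := Finite.exists_equiv_fin α
  refine ⟨n, fun v => (e v).1 + 1, fun v => ⟨le_add_self, Nat.succ_le_of_lt (e v).2⟩, ?_⟩
  intro u v p hp huv hf
  have hf' : (e u).1 + 1 = (e v).1 + 1 := hf
  exact absurd (e.injective (Fin.ext (by omega))) huv

/-- A walk in `G` whose support lies in `S` yields a walk in `G.induce S`. -/
lemma walk_toInduce {G : SimpleGraph V} {S : Set V} {u v : V} (p : G.Walk u v) :
    ∀ (hu : u ∈ S) (hv : v ∈ S), (∀ x ∈ p.support, x ∈ S) →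
      ∃ q : (G.induce S).Walk ⟨u, hu⟩ ⟨v, hv⟩, ∀ x ∈ q.support, (x : V) ∈ p.support := by
  induction p with
  | nil => intro hu hv _; exact ⟨Walk.nil, by simp⟩
  | @cons a c d h p ih =>
    intro hu hv hS
    have hc : c ∈ S := hS c (by simp)
    obtain ⟨q, hq⟩ := ih hc hv (fun x hx => hS x (by simp [hx]))
    refine ⟨Walk.cons (show (G.induce S).Adj ⟨a, hu⟩ ⟨c, hc⟩ from h) q, ?_⟩
    intro x hx
    rcases List.mem_cons.mp (by simpa [Walk.support_cons] using hx) with h1 | h1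
    · simp [h1]
    · simpa [Walk.support_cons] using Or.inr (hq x h1)

/-- Contraction of a walk in `G` ending in `T` to a walk in `closureOn G T`. -/
lemma contract_walk {G : SimpleGraph V} {T : Set V} {u v : V} (p : G.Walk u v) :
    ∀ (hv : v ∈ T),
      (∀ hu : u ∈ T, ∃ q : (closureOn G T).Walk ⟨u, hu⟩ ⟨v, hv⟩,
          ∀ x ∈ q.support, (x : V) ∈ p.support) ∧
      (∀ hu : u ∈ (Tᶜ : Set V), ∃ (w : V) (hw : w ∈ T), w ∈ p.support ∧
          (∃ b : ↥(Tᶜ : Set V), G.Adj b.1 w ∧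
            (G.induce (Tᶜ : Set V)).Reachable ⟨u, hu⟩ b) ∧
          ∃ q : (closureOn G T).Walk ⟨w, hw⟩ ⟨v, hv⟩,
            ∀ x ∈ q.support, (x : V) ∈ p.support) := by
  induction p with
  | nil =>
    intro hv
    refine ⟨fun hu => ⟨Walk.nil, by simp⟩, fun hu => absurd hv hu⟩
  | @cons a c d h p ih =>
    intro hv
    constructor
    · intro hu
      by_cases hc : c ∈ T
      · obtain ⟨q, hq⟩ := (ih hv).1 hc
        refine ⟨Walk.cons ⟨fun he => h.ne (congrArg Subtype.val he), Or.inl h⟩ q, ?_⟩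
        intro x hx
        rcases List.mem_cons.mp hx with h1 | h1
        · simp [h1]
        · simpa [Walk.support_cons] using Or.inr (hq x h1)
      · obtain ⟨w, hw, hwsup, ⟨b, hbw, hreach⟩, q, hq⟩ := (ih hv).2 hc
        by_cases haw : a = w
        · subst haw
          exact ⟨q, fun x hx => by simpa [Walk.support_cons] using Or.inr (hq x hx)⟩
        · refine ⟨Walk.cons ⟨fun he => haw (congrArg Subtype.val he),
            Or.inr ⟨⟨c, hc⟩, b, h.symm, hbw, hreach⟩⟩ q, ?_⟩
          intro x hx
          rcases List.mem_cons.mp hx with h1 | h1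
          · simp [h1]
          · simpa [Walk.support_cons] using Or.inr (hq x h1)
    · intro hu
      by_cases hc : c ∈ T
      · obtain ⟨q, hq⟩ := (ih hv).1 hc
        exact ⟨c, hc, by simp, ⟨⟨a, hu⟩, h, Reachable.refl _⟩, q,
          fun x hx => by simpa [Walk.support_cons] using Or.inr (hq x hx)⟩
      · obtain ⟨w, hw, hwsup, ⟨b, hbw, hreach⟩, q, hq⟩ := (ih hv).2 hc
        refine ⟨w, hw, by simpa [Walk.support_cons] using Or.inr hwsup,
          ⟨b, hbw, ?_⟩, q,
          fun x hx => by simpa [Walk.support_cons] using Or.inr (hq x hx)⟩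
        exact (Adj.reachable (show (G.induce (Tᶜ : Set V)).Adj ⟨a, hu⟩ ⟨c, hc⟩ from h)).trans
          hreach

/-- Expansion of a walk in `closureOn G T` to a walk in `G` whose support meets `T`
only in the support of the original walk. -/
lemma expand_walk {G : SimpleGraph V} {T : Set V} {u v : ↥T}
    (q : (closureOn G T).Walk u v) :
    ∃ p : G.Walk u.1 v.1, ∀ x ∈ p.support, ∀ hx : x ∈ T,
      (⟨x, hx⟩ : ↥T) ∈ q.support := by
  induction q with
  | nil =>
    refine ⟨Walk.nil, ?_⟩
    intro x hx hxT
    simp only [Walk.support_nil, List.mem_singleton] at hx ⊢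
    exact Subtype.ext hx
  | @cons a c d h q ih =>
    obtain ⟨p, hp⟩ := ih
    obtain ⟨hne, hadj | ⟨x, y, hxa, hyb, hreach⟩⟩ := h
    · refine ⟨Walk.cons hadj p, ?_⟩
      intro z hz hzT
      rcases List.mem_cons.mp (by simpa [Walk.support_cons] using hz) with h1 | h1
      · simp [Walk.support_cons, show (⟨z, hzT⟩ : ↥T) = a from Subtype.ext h1]
      · exact List.mem_cons_of_mem _ (hp z h1 hzT)
    · obtain ⟨r⟩ := hreach
      refine ⟨Walk.cons hxa.symm
        ((r.map (SimpleGraph.Embedding.induce (Tᶜ : Set V)).toHom).append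
          (Walk.cons hyb p)), ?_⟩
      intro z hz hzT
      replace hz := List.mem_cons.mp hz
      refine List.mem_cons.mpr ?_
      rcases hz with h1 | hz
      · exact Or.inl (Subtype.ext h1)
      · replace hz := (Walk.mem_support_append_iff _ _).mp hz
        rcases hz with h2 | h2
        · replace h2 := List.mem_map.mp (Eq.mp (congrArg (z ∈ ·)
            (Walk.support_map (p := r) (f := (SimpleGraph.Embedding.induce (Tᶜ : Set V)).toHom))) h2)
          obtain ⟨s, _, rfl⟩ := h2
          exact absurd hzT s.2
        · replace h2 := List.mem_cons.mp h2
          rcases h2 with h3 | h3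
          · subst h3; exact absurd hzT y.2
          · exact Or.inr (hp z h3 hzT)

/-- Gluing a ranking of `closureOn G T` on top of a ranking of `G − T` yields a ranking
of `G` with `T` on top. -/
lemma glue_ranking {G : SimpleGraph V} {T : Set V} {a b : ℕ}
    {g : ↥T → ℕ} {h : ↥(Tᶜ : Set V) → ℕ}
    (hg : IsRanking (closureOn G T) a g) (hh : IsRanking (G.induce (Tᶜ : Set V)) b h) :
    ∃ f : V → ℕ, IsRanking G (a + b) f ∧ ∀ u ∈ T, ∀ w ∉ T, f w < f u := by
  classical
  set f : V → ℕ := fun v => if hv : v ∈ T then g ⟨v, hv⟩ + b else h ⟨v, hv⟩ with hf_def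
  have hfT : ∀ (v : V) (hv : v ∈ T), f v = g ⟨v, hv⟩ + b := fun v hv => dif_pos hv
  have hfC : ∀ (v : V) (hv : v ∉ T), f v = h ⟨v, hv⟩ := fun v hv => dif_neg hv
  have hsep : ∀ u ∈ T, ∀ w ∉ T, f w < f u := by
    intro u hu w hw
    rw [hfT u hu, hfC w hw]
    have h1 := (hg.1 ⟨u, hu⟩).1
    have h2 := (hh.1 ⟨w, hw⟩).2
    omega
  refine ⟨f, ⟨?_, ?_⟩, hsep⟩
  · intro v
    by_cases hv : v ∈ T
    · rw [hfT v hv]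
      have h1 := hg.1 ⟨v, hv⟩
      omega
    · rw [hfC v hv]
      have h1 := hh.1 ⟨v, hv⟩
      omega
  · intro u v p hp huv hfe
    by_cases hu : u ∈ T
    · have hv : v ∈ T := by
        by_contra hv
        have := hsep u hu v hv
        omega
      obtain ⟨q, hq⟩ := (contract_walk p hv).1 hu
      have hne : (⟨u, hu⟩ : ↥T) ≠ ⟨v, hv⟩ := fun he => huv (congrArg Subtype.val he)
      have hge : g ⟨u, hu⟩ = g ⟨v, hv⟩ := by
        have h1 := hfT u hu; have h2 := hfT v hv; omega
      obtain ⟨w, hwsup, hlt⟩ := hg.2 q.bypass q.bypass_isPath hne hge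
      refine ⟨w.1, hq w (q.support_bypass_subset hwsup), ?_⟩
      rw [hfT u hu]
      have hfw : f w.1 = g w + b := hfT w.1 w.2
      omega
    · by_cases hT : ∃ x ∈ p.support, x ∈ T
      · obtain ⟨x, hxsup, hxT⟩ := hT
        refine ⟨x, hxsup, ?_⟩
        have := hsep x hxT u hu
        omega
      · push_neg at hT
        have hv : v ∉ T := hT v p.end_mem_support
        obtain ⟨q, hq⟩ := walk_toInduce p hu hv hT
        have hne : (⟨u, hu⟩ : ↥(Tᶜ : Set V)) ≠ ⟨v, hv⟩ :=
          fun he => huv (congrArg Subtype.val he)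
        have hpath : q.bypass.IsPath := q.bypass_isPath
        have hhe : h ⟨u, hu⟩ = h ⟨v, hv⟩ := by
          have h1 := hfC u hu; have h2 := hfC v hv; omega
        obtain ⟨w, hwsup, hlt⟩ := hh.2 q.bypass hpath hne hhe
        refine ⟨w.1, hq w (q.support_bypass_subset hwsup), ?_⟩
        rw [hfC u hu]
        have hfw : f w.1 = h w := hfC w.1 w.2
        omega

end Aux

/-- `td(G) = td(G⟨T⟩) + td(G − T)` iff there is an optimal ranking of `G` in which every
vertex of `T` receives a strictly higher label than every vertex outside `T`. -/
theorem treedepth_eq_closureOn_add_iff {V : Type*} [Fintype V] (G : SimpleGraph V)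
    (T : Set V) :
    treedepth G = treedepth (closureOn G T) + treedepth (G.induce (Tᶜ : Set V)) ↔
      ∃ f : V → ℕ, IsRanking G (treedepth G) f ∧
        ∀ u ∈ T, ∀ w ∉ T, f w < f u := by
  classical
  open SimpleGraph in
  obtain ⟨g, hg⟩ := Nat.sInf_mem (exists_ranking_s9 (closureOn G T))
  obtain ⟨h, hh⟩ := Nat.sInf_mem (exists_ranking_s9 (G.induce (Tᶜ : Set V)))
  have hle : treedepth G ≤ treedepth (closureOn G T) + treedepth (G.induce (Tᶜ : Set V)) := by
    obtain ⟨f, hf, -⟩ := glue_ranking hg hh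
    exact Nat.sInf_le ⟨f, hf⟩
  constructor
  · intro heq
    obtain ⟨f, hf, hsep⟩ := glue_ranking hg hh
    rw [heq]
    exact ⟨f, hf, hsep⟩
  · rintro ⟨f, hf, hsep⟩
    haveI : Fintype ↥(Tᶜ : Set V) := (Set.toFinite _).fintype
    set t := treedepth G with ht
    set m := Finset.univ.sup (fun w : ↥(Tᶜ : Set V) => f w.1) with hm
    have hfm : ∀ w : ↥(Tᶜ : Set V), f w.1 ≤ m := by
      intro w
      rw [hm]
      exact Finset.le_sup (f := fun w : ↥(Tᶜ : Set V) => f w.1) (Finset.mem_univ w)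
    have hum : ∀ (u : V), u ∈ T → m < f u := by
      intro u hu
      rw [hm]
      have hb0 : (⊥ : ℕ) < f u := by
        have h1 := (hf.1 u).1
        simp only [Nat.bot_eq_zero]
        omega
      exact (Finset.sup_lt_iff hb0).mpr fun w _ => hsep u hu w.1 w.2
    have hmt : m ≤ t := by
      rw [hm]
      exact Finset.sup_le fun w _ => (hf.1 w.1).2
    -- td(G − T) ≤ m
    have hb : treedepth (G.induce (Tᶜ : Set V)) ≤ m := by
      refine Nat.sInf_le ⟨fun w => f w.1, fun w => ⟨(hf.1 w.1).1, hfm w⟩, ?_⟩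
      intro u v p hp huv hfe
      have hinj : Function.Injective
          ((SimpleGraph.Embedding.induce (G := G) (Tᶜ : Set V)).toHom : _ → V) :=
        Subtype.val_injective
      have hp' := p.map_isPath_of_injective hinj hp
      obtain ⟨w, hwsup, hlt⟩ := hf.2 _ hp' (fun he => huv (Subtype.ext he)) hfe
      rw [SimpleGraph.Walk.support_map] at hwsup
      obtain ⟨x, hx, rfl⟩ := List.mem_map.mp hwsup
      exact ⟨x, hx, hlt⟩
    -- td(G⟨T⟩) ≤ t − m
    have ha : treedepth (closureOn G T) ≤ t - m := by
      refine Nat.sInf_le ⟨fun u => f u.1 - m, fun u => ?_, ?_⟩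
      · show 1 ≤ f u.1 - m ∧ f u.1 - m ≤ t - m
        have h1 := hum u.1 u.2
        have h2 := (hf.1 u.1).2
        omega
      · intro u v q hq huv hge
        have hge' : f u.1 - m = f v.1 - m := hge
        have hfuv : f u.1 = f v.1 := by
          have h1 := hum u.1 u.2
          have h2 := hum v.1 v.2
          omega
        obtain ⟨p, hp⟩ := expand_walk q
        have hne : u.1 ≠ v.1 := fun he => huv (Subtype.ext he)
        obtain ⟨w, hwsup, hlt⟩ := hf.2 p.bypass p.bypass_isPath hne hfuv
        have hwT : w ∈ T := by
          by_contra hwT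
          have h3 : f w ≤ m := hfm ⟨w, hwT⟩
          have h4 := hum u.1 u.2
          omega
        refine ⟨⟨w, hwT⟩, hp w (p.support_bypass_subset hwsup) hwT, ?_⟩
        show f u.1 - m < f w - m
        have := hum u.1 u.2
        omega
    have : treedepth (closureOn G T) + treedepth (G.induce (Tᶜ : Set V)) ≤ t := by
      calc treedepth (closureOn G T) + treedepth (G.induce (Tᶜ : Set V))
          ≤ (t - m) + m := Nat.add_le_add ha hb
        _ = t := Nat.sub_add_cancel hmt
    omega
end
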